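/- Let G be a group, Σ a neighbourhood family of subgroups of G whose infinitesimal subgroup S_Σ = ⋂{K | K ∈ Σ} belongs to Σ, and equip G with the subgroup topology G^Σ generated by left cosets of elements of Σ. Then G^Σ is a topological group if and only if S_Σ is a normal subgroup of G. -/

import Mathlib

open Pointwise Topology

/-- The subgroup topology on `G` determined by a collection `F` of subgroups:
generated by all left cosets of members of `F`. -/
def subgroupTopology {G : Type*} [Group G] (F : Set (Subgroup G)) : TopologicalSpace G :=
  TopologicalSpace.generateFrom {s | ∃ (g : G) (K : Subgroup G), K ∈ F ∧ s = g • (K : Set G)}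

/-- A collection of subgroups is a neighbourhood family if any two members
contain a common member. -/
def IsNeighbourhoodFamily {G : Type*} [Group G] (F : Set (Subgroup G)) : Prop :=
  ∀ K₁ ∈ F, ∀ K₂ ∈ F, ∃ S ∈ F, S ≤ K₁ ⊓ K₂

/-- The subgroup topology `G^H` determined by a subgroup `H`: generated by all
left cosets of subgroups containing `H`. -/
def subgroupTopologyOf {G : Type*} [Group G] (H : Subgroup G) : TopologicalSpace G :=
  subgroupTopology {K | H ≤ K}

lemma coset_isOpen {G : Type*} [Group G] {F : Set (Subgroup G)} {K : Subgroup G}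
    (hK : K ∈ F) (g : G) : IsOpen[subgroupTopology F] (g • (K : Set G)) :=
  TopologicalSpace.GenerateOpen.basic _ ⟨g, K, hK, rfl⟩

lemma isOpen_iff_key {G : Type*} [Group G] {F : Set (Subgroup G)} (hS : sInf F ∈ F)
    (U : Set G) :
    IsOpen[subgroupTopology F] U ↔ ∀ x ∈ U, x • ((sInf F : Subgroup G) : Set G) ⊆ U := by
  constructor
  · intro h
    induction h with
    | basic s hs =>
        obtain ⟨g, K, hK, rfl⟩ := hs
        intro x hx y hy
        rw [Set.mem_smul_set_iff_inv_smul_mem] at hx hy ⊢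
        have hle : sInf F ≤ K := sInf_le hK
        have : g⁻¹ • y = (g⁻¹ • x) * (x⁻¹ • y) := by
          simp [smul_eq_mul, mul_assoc]
        rw [this]
        exact K.mul_mem hx (hle hy)
    | univ => intro x _ y _; trivial
    | inter s t _ _ ihs iht =>
        intro x hx y hy
        exact ⟨ihs x hx.1 hy, iht x hx.2 hy⟩
    | sUnion S _ ih =>
        intro x hx y hy
        obtain ⟨s, hsS, hxs⟩ := hx
        exact ⟨s, hsS, ih s hsS x hxs hy⟩
  · intro h
    have : U = ⋃ x ∈ U, x • ((sInf F : Subgroup G) : Set G) := by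
      apply Set.Subset.antisymm
      · intro x hx
        exact Set.mem_biUnion hx ⟨1, (sInf F).one_mem, by simp⟩
      · intro y hy
        simp only [Set.mem_iUnion] at hy
        obtain ⟨x, hx, hy⟩ := hy
        exact h x hx hy
    rw [this]
    exact @isOpen_biUnion G G (subgroupTopology F) _ _ fun x _ => coset_isOpen hS x

theorem subgroupTopology_topologicalGroup_iff_normal {G : Type*} [Group G]
    (F : Set (Subgroup G)) (hF : IsNeighbourhoodFamily F) (hS : sInf F ∈ F) :
    @IsTopologicalGroup G (subgroupTopology F) _ ↔ (sInf F).Normal := by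
  letI := subgroupTopology F
  set S := sInf F with hSdef
  constructor
  · intro hTG
    constructor
    intro n hn g
    have hc : Continuous fun x : G => g * x * g⁻¹ :=
      (continuous_const.mul continuous_id).mul continuous_const
    have hSopen : IsOpen ((S : Subgroup G) : Set G) := by
      have := coset_isOpen hS (1 : G)
      simpa using this
    have hU : IsOpen ((fun x : G => g * x * g⁻¹) ⁻¹' (S : Set G)) := hSopen.preimage hc
    have h1 : (1 : G) ∈ (fun x : G => g * x * g⁻¹) ⁻¹' (S : Set G) := by
      simp [S.one_mem]
    have := (isOpen_iff_key hS _).mp hU 1 h1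
    have hn' : n ∈ (1 : G) • ((S : Subgroup G) : Set G) := by simpa using hn
    exact this hn'
  · intro hN
    refine { continuous_mul := ?_, continuous_inv := ?_ }
    · rw [continuous_def]
      intro U hU
      rw [isOpen_prod_iff]
      rintro x y hxy
      refine ⟨x • (S : Set G), y • (S : Set G), coset_isOpen hS x, coset_isOpen hS y,
        ⟨1, S.one_mem, by simp⟩, ⟨1, S.one_mem, by simp⟩, ?_⟩
      rintro ⟨a, b⟩ ⟨ha, hb⟩
      obtain ⟨s, hs, rfl⟩ := ha
      obtain ⟨t, ht, rfl⟩ := hb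
      have key := (isOpen_iff_key hS U).mp hU (x * y) hxy
      apply key
      refine ⟨(y⁻¹ * s * y) * t, S.mul_mem (hN.conj_mem' s hs y) ht, ?_⟩
      simp [smul_eq_mul, mul_assoc]
    · rw [continuous_def]
      intro U hU
      rw [isOpen_iff_key hS]
      intro x hx y hy
      obtain ⟨s, hs, rfl⟩ := hy
      have key := (isOpen_iff_key hS U).mp hU x⁻¹ hx
      show (x * s)⁻¹ ∈ U
      apply key
      refine ⟨x * s⁻¹ * x⁻¹, hN.conj_mem s⁻¹ (S.inv_mem hs) x, ?_⟩
      simp [smul_eq_mul, mul_assoc]
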